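/- The final stage of the 3D DJT computes sums along discrete 3D lines: with N = 2^n and f : {0,...,N-1}³ → ℤ extended by zero, f^n(s₁, s₂, d₁, d₂) = Σ_{u=0}^{N-1} f(u, L^n_{s₁}(u) + d₁, L^n_{s₂}(u) + d₂) for all slopes s₁, s₂ ∈ {0,...,N-1} and all displacements d₁, d₂. -/
import Mathlib


open Finset

/-- Closed-form discrete line `l^n_s(u_0,...,u_{n-1})`. -/
def dline (n s : ℕ) (u : ℕ → ℕ) : ℕ :=
  ∑ i ∈ Finset.range n, u (n - 1 - i) * ((s / 2 ^ i + 1) / 2)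

/-- `i`-th binary digit of `k` (least significant first). -/
def bit (k i : ℕ) : ℕ := k / 2 ^ i % 2

/-- Discrete line applied to the binary digits of `k`. -/
def Lline (n s k : ℕ) : ℕ := dline n s (bit k)


lemma dline_succ (n s : ℕ) (u : ℕ → ℕ) :
    dline (n+1) s u = dline n (s/2) u + u n * ((s+1)/2) := by
  unfold dline
  rw [Finset.sum_range_succ']
  congr 1
  · apply Finset.sum_congr rfl
    intro i _
    have h1 : n + 1 - 1 - (i + 1) = n - 1 - i := by omega
    have h2 : s / 2 ^ (i+1) = s / 2 / 2 ^ i := by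
      rw [Nat.div_div_eq_div_mul, pow_succ']
    rw [h1, h2]
  · simp

lemma bit_lo (m u : ℕ) (hu : u < 2^m) : bit u m = 0 := by
  simp [bit, Nat.div_eq_of_lt hu]

lemma bit_hi (m u : ℕ) (hu : u < 2^m) : bit (2^m + u) m = 1 := by
  unfold bit
  have : 2^m + u = 2^m * 1 + u := by ring
  rw [this, Nat.mul_add_div (by positivity)]
  rw [Nat.div_eq_of_lt hu]

lemma bit_add_pow (m u i : ℕ) (hi : i < m) (hu : u < 2^m) :
    bit (2^m + u) i = bit u i := by
  unfold bit
  have he : i + (m - i) = m := by omega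
  have h : 2^m + u = u + 2^i * 2^(m-i) := by
    rw [← pow_add, he, Nat.add_comm]
  rw [h, Nat.add_mul_div_left _ _ (by positivity)]
  have h2 : 2^(m-i) = 2 * 2^(m-i-1) := by
    rw [← pow_succ']
    congr 1
    omega
  rw [h2, Nat.add_mul_mod_self_left]

lemma Lline_lo (m s u : ℕ) (hu : u < 2^m) : Lline (m+1) s u = Lline m (s/2) u := by
  unfold Lline
  rw [dline_succ, bit_lo m u hu]
  simp

lemma Lline_hi (m s u : ℕ) (hu : u < 2^m) :
    Lline (m+1) s (2^m + u) = Lline m (s/2) u + (s % 2 + s / 2) := by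
  unfold Lline
  rw [dline_succ, bit_hi m u hu]
  have : dline m (s/2) (bit (2^m + u)) = dline m (s/2) (bit u) := by
    unfold dline
    apply Finset.sum_congr rfl
    intro i hi
    simp only [Finset.mem_range] at hi
    rw [bit_add_pow m u (m-1-i) (by omega) hu]
  rw [this]
  have : (s+1)/2 = s % 2 + s / 2 := by omega
  omega

/-- The iterative multiscale 3D DJT: stage 0 reads the input, each stage applies the
two-term two-scale recursion, with slopes and block index in decimal. -/
def djtStage (f : ℤ → ℤ → ℤ → ℤ) : ℕ → ℕ → ℕ → ℕ → ℤ → ℤ → ℤ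
  | 0, v, _, _, d₁, d₂ => f (v : ℤ) d₁ d₂
  | m + 1, v, s₁, s₂, d₁, d₂ =>
      djtStage f m (2 * v) (s₁ / 2) (s₂ / 2) d₁ d₂ +
      djtStage f m (2 * v + 1) (s₁ / 2) (s₂ / 2)
        (d₁ + (s₁ % 2 : ℤ) + (s₁ / 2 : ℤ)) (d₂ + (s₂ % 2 : ℤ) + (s₂ / 2 : ℤ))


lemma djt_key (f : ℤ → ℤ → ℤ → ℤ) :
    ∀ m v s₁ s₂ d₁ d₂, djtStage f m v s₁ s₂ d₁ d₂ =
      ∑ u ∈ Finset.range (2^m),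
        f ((2^m * v + u : ℕ) : ℤ) ((Lline m s₁ u : ℤ) + d₁) ((Lline m s₂ u : ℤ) + d₂) := by
  intro m
  induction m with
  | zero =>
      intro v s₁ s₂ d₁ d₂
      simp [djtStage, Lline, dline]
  | succ m ih =>
      intro v s₁ s₂ d₁ d₂
      have hsplit : 2^(m+1) = 2^m + 2^m := by rw [pow_succ]; ring
      rw [djtStage, ih, ih, hsplit, Finset.sum_range_add]
      congr 1
      · apply Finset.sum_congr rfl
        intro u hu
        simp only [Finset.mem_range] at hu
        rw [Lline_lo m s₁ u hu, Lline_lo m s₂ u hu]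
        congr 2
        push_cast
        ring
      · apply Finset.sum_congr rfl
        intro u hu
        simp only [Finset.mem_range] at hu
        rw [Lline_hi m s₁ u hu, Lline_hi m s₂ u hu]
        have h1 : 2^m * (2*v+1) + u = 2^(m+1) * v + (2^m + u) := by rw [pow_succ]; ring
        rw [h1]
        congr 1 <;> push_cast <;> ring

theorem djt3_final_stage (n : ℕ) (f : ℤ → ℤ → ℤ → ℤ)
    (hf : ∀ x y z : ℤ,
      x < 0 ∨ (2 : ℤ) ^ n ≤ x ∨ y < 0 ∨ (2 : ℤ) ^ n ≤ y ∨ z < 0 ∨ (2 : ℤ) ^ n ≤ z →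
      f x y z = 0)
    (s₁ : ℕ) (hs₁ : s₁ < 2 ^ n) (s₂ : ℕ) (hs₂ : s₂ < 2 ^ n) (d₁ d₂ : ℤ) :
    djtStage f n 0 s₁ s₂ d₁ d₂ =
      ∑ u ∈ Finset.range (2 ^ n),
        f (u : ℤ) ((Lline n s₁ u : ℤ) + d₁) ((Lline n s₂ u : ℤ) + d₂) := by
  rw [djt_key]
  simp
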